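/- Let X be a type with decidable equality equipped with a linear order, and let A be a unital ring. Suppose γ : X → A and s : X → A satisfy the relations R': (R'₁) s x * s x = 1 and s x * s x' = s x' * s x for all x, x'; (R'₂) γ x * γ x' + γ x' * γ x = 2·1 if x = x' and = 0 if x ≠ x'; (R'₃) s x * γ x' * s x = −γ x' if x = x' and = γ x' if x ≠ x'. For a finset J of X, let Γ_J denote the product of the γ x for x ∈ J taken in increasing order, and S_J the product of the s x for x ∈ J. Then for all finsets J, J' of X: Γ_J * S_{J'} = (−1)^{|J ∩ J'|} • (S_{J'} * Γ_J). -/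

import Mathlib

/-- The ordered product of `f x` over `x ∈ J`, taken in increasing order. -/
def ordProd {X : Type*} [LinearOrder X] {A : Type*} [Monoid A]
    (f : X → A) (J : Finset X) : A :=
  ((J.sort (· ≤ ·)).map f).prod

lemma countP_sort {X : Type*} [LinearOrder X] (S : Finset X) (p : X → Prop)
    [DecidablePred p] :
    (S.sort (· ≤ ·)).countP (fun x => decide (p x)) = (S.filter p).card := by
  rw [List.Perm.countP_eq _ (Finset.sort_perm_toList S (· ≤ ·)),
    ← Multiset.coe_countP, Finset.coe_toList, Multiset.countP_eq_card_filter]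
  rfl

section aux
variable {X : Type*} [DecidableEq X] [LinearOrder X] {A : Type*} [Ring A]
  (γ s : X → A)
  (hR1a : ∀ x : X, s x * s x = 1)
  (hR3 : ∀ x x' : X, s x * γ x' * s x = if x = x' then -γ x' else γ x')

set_option linter.unusedSectionVars false

include hR1a hR3 in
lemma key_one (x a : X) :
    γ x * s a = ((-1 : ℤ) ^ (if a = x then 1 else 0)) • (s a * γ x) := by
  have h := hR3 a x
  have := congrArg (fun t => s a * t) h
  simp only [← mul_assoc, hR1a, one_mul] at this
  by_cases hax : a = x <;> simp [hax] at this ⊢ <;> rw [this]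

include hR1a hR3 in
lemma key_list (x : X) (l : List X) :
    γ x * (l.map s).prod =
      ((-1 : ℤ) ^ (l.countP (· = x))) • ((l.map s).prod * γ x) := by
  induction l with
  | nil => simp
  | cons a l ih =>
    simp only [List.map_cons, List.prod_cons]
    rw [← mul_assoc, key_one γ s hR1a hR3 x a, smul_mul_assoc, mul_assoc, ih,
      mul_smul_comm, smul_smul, ← pow_add]
    have he : (if a = x then 1 else 0) + l.countP (· = x)
        = (a :: l).countP (· = x) := by
      rw [List.countP_cons]
      by_cases hax : a = x <;> simp [hax] <;> omega
    rw [he, ← mul_assoc]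

include hR1a hR3 in
lemma key_list2 (m : List X) (S : Finset X) :
    (m.map γ).prod * ordProd s S =
      ((-1 : ℤ) ^ (m.countP (· ∈ S))) • (ordProd s S * (m.map γ).prod) := by
  induction m with
  | nil => simp
  | cons a m ih =>
    simp only [List.map_cons, List.prod_cons]
    have hc : ((S.sort (· ≤ ·)).countP (· = a)) = if a ∈ S then 1 else 0 := by
      rw [show (fun x => decide (x = a)) = (fun x => decide ((fun y => y = a) x)) from rfl,
        countP_sort, Finset.filter_eq']
      by_cases ha : a ∈ S <;> simp [ha]
    rw [mul_assoc, ih, mul_smul_comm, ← mul_assoc]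
    rw [show ordProd s S = ((S.sort (· ≤ ·)).map s).prod from rfl,
      key_list γ s hR1a hR3 a (S.sort (· ≤ ·)), hc,
      smul_mul_assoc, smul_smul, ← pow_add]
    have he : m.countP (· ∈ S) + (if a ∈ S then 1 else 0)
        = (a :: m).countP (· ∈ S) := by
      rw [List.countP_cons]
      by_cases ha : a ∈ S <;> simp [ha] <;> omega
    rw [he, mul_assoc]
end aux

theorem stmt_8 {X : Type*} [DecidableEq X] [LinearOrder X] {A : Type*} [Ring A]
    (γ s : X → A)
    (hR1a : ∀ x : X, s x * s x = 1)
    (hR1b : ∀ x x' : X, s x * s x' = s x' * s x)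
    (hR2 : ∀ x x' : X, γ x * γ x' + γ x' * γ x = if x = x' then (2 : A) * 1 else 0)
    (hR3 : ∀ x x' : X, s x * γ x' * s x = if x = x' then -γ x' else γ x')
    (J J' : Finset X) :
    ordProd γ J * ordProd s J' =
      ((-1 : ℤ) ^ (J ∩ J').card) • (ordProd s J' * ordProd γ J) := by
  have h := key_list2 γ s hR1a hR3 (J.sort (· ≤ ·)) J'
  have hcount : ((J.sort (· ≤ ·)).countP (· ∈ J')) = (J ∩ J').card := by
    rw [show (fun x => decide (x ∈ J')) = (fun x => decide ((fun y => y ∈ J') x)) from rfl,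
      countP_sort, Finset.filter_mem_eq_inter]
  rw [ordProd, h, hcount]
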